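/- Let n ≥ 0, c a nonzero complex number, ℓ a positive integer, λ ∈ ℂ a primitive ℓ-th root of unity, and s an integer with gcd(q,ℓ)=1 and p ≡ q·s (mod ℓ). Define (n+1)×(n+1) matrices A = c·P, where P is the cyclic permutation matrix sending e_i to e_{i+1} (indices mod n+1), and B = diag(λ, λ^s, λ^(s^2), ..., λ^(s^n)). Then A B^p = B^q A if and only if ℓ divides q^(n+1) − p^(n+1). -/

import Mathlib

/-- The cyclic permutation matrix on `Fin (n+1)` sending `e i` to `e (i+1)`. -/
def cycP (n : ℕ) : Matrix (Fin (n + 1)) (Fin (n + 1)) ℂ :=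
  Matrix.of fun i j => if i = j + 1 then 1 else 0

lemma diag_zpow {m : ℕ} (d : Fin (m + 1) → ℂ) (hd : ∀ i, d i ≠ 0) :
    ∀ k : ℤ, (Matrix.diagonal d) ^ k = Matrix.diagonal (fun i => d i ^ k)
  | (j : ℕ) => by
      rw [zpow_natCast, Matrix.diagonal_pow]
      simp [zpow_natCast]
  | Int.negSucc j => by
      rw [zpow_negSucc, Matrix.diagonal_pow]
      refine Matrix.inv_eq_right_inv ?_
      rw [Matrix.diagonal_mul_diagonal, ← Matrix.diagonal_one]
      have hfun : (fun i => (d ^ (j + 1)) i * d i ^ Int.negSucc j) = fun _ => (1 : ℂ) := by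
        funext i
        rw [Pi.pow_apply, ← zpow_natCast, ← zpow_add₀ (hd i), Int.negSucc_eq]
        have he : ((j + 1 : ℕ) : ℤ) + -((j : ℤ) + 1) = 0 := by push_cast; ring
        rw [he, zpow_zero]
      rw [hfun]

lemma arith_aux (n : ℕ) (p q s : ℤ) (ℓ : ℕ) (hℓ : 0 < ℓ)
    (hqℓ : Int.gcd q ℓ = 1) (hpqs : p ≡ q * s [ZMOD ℓ]) :
    (∀ j : Fin (n + 1), (ℓ : ℤ) ∣ s ^ (j : ℕ) * p - s ^ (((j + 1) : Fin (n + 1)) : ℕ) * q)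
      ↔ (ℓ : ℤ) ∣ q ^ (n + 1) - p ^ (n + 1) := by
  have hcast : ∀ a : ℤ, (ℓ : ℤ) ∣ a ↔ (a : ZMod ℓ) = 0 := fun a =>
    (ZMod.intCast_zmod_eq_zero_iff_dvd a ℓ).symm
  have hP : ((p : ZMod ℓ)) = (q : ZMod ℓ) * (s : ZMod ℓ) := by
    have := (ZMod.intCast_eq_intCast_iff _ _ _).mpr hpqs
    push_cast at this
    exact this
  have hu : IsUnit ((q : ZMod ℓ)) := by
    obtain ⟨u, v, huv⟩ := Int.isCoprime_iff_gcd_eq_one.mpr hqℓ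
    refine IsUnit.of_mul_eq_one (u : ZMod ℓ) ?_
    have : ((u * q + v * ℓ : ℤ) : ZMod ℓ) = ((1 : ℤ) : ZMod ℓ) := by rw [huv]
    push_cast at this
    simpa [ZMod.natCast_self, mul_comm] using this
  constructor
  · intro h
    have hn := h (Fin.last n)
    rw [Fin.last_add_one] at hn
    simp only [Fin.val_last, Fin.val_zero, pow_zero, one_mul] at hn
    rw [hcast] at hn ⊢
    push_cast at hn ⊢
    have hSP : (s : ZMod ℓ) ^ n * (p : ZMod ℓ) = (q : ZMod ℓ) := by
      linear_combination hn
    have : (p : ZMod ℓ) ^ (n + 1) = (q : ZMod ℓ) ^ (n + 1) := by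
      calc (p : ZMod ℓ) ^ (n + 1) = ((q : ZMod ℓ) * s) ^ n * p := by rw [hP]; ring
        _ = (q : ZMod ℓ) ^ n * ((s : ZMod ℓ) ^ n * p) := by ring
        _ = (q : ZMod ℓ) ^ (n + 1) := by rw [hSP]; ring
    rw [this]; ring
  · intro h j
    rw [hcast] at h ⊢
    push_cast at h ⊢
    rcases eq_or_lt_of_le (Fin.le_last j) with hj | hj
    · rw [hj, Fin.last_add_one]
      simp only [Fin.val_last, Fin.val_zero, pow_zero, one_mul]
      have hcan : IsUnit ((q : ZMod ℓ) ^ n) := hu.pow n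
      have : (q : ZMod ℓ) ^ n * ((s : ZMod ℓ) ^ n * (p : ZMod ℓ)) =
          (q : ZMod ℓ) ^ n * (q : ZMod ℓ) := by
        have hq1 : (q : ZMod ℓ) ^ (n + 1) = (p : ZMod ℓ) ^ (n + 1) := by
          linear_combination h
        calc (q : ZMod ℓ) ^ n * ((s : ZMod ℓ) ^ n * (p : ZMod ℓ))
            = ((q : ZMod ℓ) * s) ^ n * p := by ring
          _ = (p : ZMod ℓ) ^ (n + 1) := by rw [← hP]; ring
          _ = (q : ZMod ℓ) ^ (n + 1) := hq1.symm
          _ = (q : ZMod ℓ) ^ n * (q : ZMod ℓ) := by ring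
      have := hcan.mul_left_cancel this
      rw [this]; ring
    · rw [Fin.val_add_one_of_lt hj]
      have : ((s : ZMod ℓ)) ^ ((j : ℕ) + 1) * (q : ZMod ℓ)
          = (s : ZMod ℓ) ^ (j : ℕ) * (p : ZMod ℓ) := by
        rw [hP]; ring
      rw [this]; ring

theorem stmt10 (n : ℕ) (p q s : ℤ) (hp : p ≠ 0) (hq : q ≠ 0) (hpq : IsCoprime p q)
    (c : ℂ) (hc : c ≠ 0) (ℓ : ℕ) (hℓ : 0 < ℓ) (lam : ℂ)
    (hlam : IsPrimitiveRoot lam ℓ) (hqℓ : Int.gcd q ℓ = 1)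
    (hpqs : p ≡ q * s [ZMOD ℓ]) :
    (c • cycP n) * (Matrix.diagonal fun i : Fin (n + 1) => lam ^ (s ^ (i : ℕ))) ^ p =
      (Matrix.diagonal fun i : Fin (n + 1) => lam ^ (s ^ (i : ℕ))) ^ q * (c • cycP n)
    ↔ (ℓ : ℤ) ∣ q ^ (n + 1) - p ^ (n + 1) := by
  have hl0 : ℓ ≠ 0 := hℓ.ne'
  have hlam0 : lam ≠ 0 := hlam.ne_zero hl0
  set d : Fin (n + 1) → ℂ := fun i => lam ^ (s ^ (i : ℕ)) with hdd
  have hdne : ∀ i, d i ≠ 0 := fun i => zpow_ne_zero _ hlam0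
  have key : ∀ x y : ℤ, lam ^ x = lam ^ y ↔ (ℓ : ℤ) ∣ x - y := by
    intro x y
    rw [← hlam.zpow_eq_one_iff_dvd, zpow_sub₀ hlam0,
      div_eq_one_iff_eq (zpow_ne_zero _ hlam0)]
  rw [diag_zpow d hdne p, diag_zpow d hdne q, ← arith_aux n p q s ℓ hℓ hqℓ hpqs]
  constructor
  · intro h j
    have := Matrix.ext_iff.mpr h (j + 1) j
    simp only [Matrix.mul_diagonal, Matrix.diagonal_mul, Matrix.smul_apply, cycP,
      Matrix.of_apply, smul_eq_mul, eq_self_iff_true, if_true, mul_one] at this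
    have h2 : d j ^ p = d (j + 1) ^ q := by
      apply mul_left_cancel₀ hc
      rw [this]; ring
    rw [hdd] at h2
    simp only [← zpow_natCast lam, ← zpow_mul] at h2
    rw [key] at h2
    convert h2 using 2 <;> push_cast <;> ring
  · intro h
    ext i j
    simp only [Matrix.mul_diagonal, Matrix.diagonal_mul, Matrix.smul_apply, cycP,
      Matrix.of_apply, smul_eq_mul, mul_ite, ite_mul, mul_one, one_mul, mul_zero, zero_mul]
    by_cases hij : i = j + 1
    · rw [if_pos hij, if_pos hij, hij]
      have h2 : d j ^ p = d (j + 1) ^ q := by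
        rw [hdd]
        simp only [← zpow_natCast lam, ← zpow_mul]
        rw [key]
        convert h j using 2 <;> push_cast <;> ring
      rw [h2]; ring
    · rw [if_neg hij, if_neg hij]
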